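/- Let S be a finite set of points in the Euclidean plane, G the weighted unit-disk graph on S, s ∈ S, and ε > 0. For a vertex x in the connected component of s, let ℓ_x denote the minimum number of edges among all shortest paths from s to x, and define τ_x = d_G(s,x) + (ℓ_x − 1)·(ε/2). If ⟨z₀, …, z_t⟩ with t ≥ 2 is an edge-minimal shortest path from s = z₀ to a = z_t and r' = z_{t−2}, then τ_a > τ_{r'} + 1. -/

import Mathlib

noncomputable section

abbrev Pt := EuclideanSpace ℝ (Fin 2)

/-- The weighted unit-disk graph on a finite point set `S`: vertices are the points of
`S`, two distinct points are adjacent iff their Euclidean distance is at most 1. -/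
def UDG (S : Finset Pt) : SimpleGraph {x : Pt // x ∈ S} where
  Adj a b := a ≠ b ∧ dist (a : Pt) (b : Pt) ≤ 1
  symm := by
    constructor
    intro a b hab
    exact ⟨hab.1.symm, by rw [dist_comm]; exact hab.2⟩
  loopless := by
    constructor
    intro a ha
    exact ha.1 rfl

/-- The (weighted) length of a walk: the sum of the Euclidean lengths of its edges. -/
def wlen {S : Finset Pt} {u v : {x : Pt // x ∈ S}} (p : (UDG S).Walk u v) : ℝ :=
  (p.darts.map (fun d => dist (d.toProd.1 : Pt) (d.toProd.2 : Pt))).sum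

/-- The shortest-path distance in the weighted unit-disk graph. -/
def dG (S : Finset Pt) (u v : {x : Pt // x ∈ S}) : ℝ :=
  sInf {L : ℝ | ∃ p : (UDG S).Walk u v, wlen p = L}

lemma wlen_nil {S : Finset Pt} {u : {x : Pt // x ∈ S}} :
    wlen (SimpleGraph.Walk.nil : (UDG S).Walk u u) = 0 := rfl

lemma wlen_cons {S : Finset Pt} {u v w : {x : Pt // x ∈ S}} (h : (UDG S).Adj u v)
    (p : (UDG S).Walk v w) :
    wlen (SimpleGraph.Walk.cons h p) = dist (u : Pt) (v : Pt) + wlen p := by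
  simp [wlen, SimpleGraph.Walk.darts_cons]

lemma wlen_append {S : Finset Pt} {u v w : {x : Pt // x ∈ S}} (p : (UDG S).Walk u v)
    (p' : (UDG S).Walk v w) : wlen (p.append p') = wlen p + wlen p' := by
  simp [wlen, SimpleGraph.Walk.darts_append]

lemma wlen_reverse {S : Finset Pt} {u v : {x : Pt // x ∈ S}} (p : (UDG S).Walk u v) :
    wlen p.reverse = wlen p := by
  simp only [wlen, SimpleGraph.Walk.darts_reverse, List.map_reverse, List.sum_reverse,
    List.map_map]
  congr 1
  apply List.map_congr_left
  intro d _
  simp [SimpleGraph.Dart.symm, dist_comm]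

lemma wlen_nonneg {S : Finset Pt} {u v : {x : Pt // x ∈ S}} (p : (UDG S).Walk u v) :
    0 ≤ wlen p := by
  apply List.sum_nonneg
  intro x hx
  obtain ⟨d, -, rfl⟩ := List.mem_map.mp hx
  exact dist_nonneg

lemma dG_le_wlen {S : Finset Pt} {u v : {x : Pt // x ∈ S}} (w : (UDG S).Walk u v) :
    dG S u v ≤ wlen w := by
  apply csInf_le
  · exact ⟨0, fun L ⟨p, hp⟩ => hp ▸ wlen_nonneg p⟩
  · exact ⟨w, rfl⟩

lemma two_step {V : Type*} {G : SimpleGraph V} {a s : V} (w : G.Walk a s)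
    (h : 2 ≤ w.length) :
    ∃ (b c : V) (h₁ : G.Adj a b) (h₂ : G.Adj b c) (w₂ : G.Walk c s),
      w = SimpleGraph.Walk.cons h₁ (SimpleGraph.Walk.cons h₂ w₂) := by
  cases w with
  | nil => simp at h
  | cons h₁ w₁ =>
    cases w₁ with
    | nil => simp at h
    | cons h₂ w₂ => exact ⟨_, _, h₁, h₂, w₂, rfl⟩

/-- Inequality in the proof of Lemma 7 (lem-correct'): with `τ_x = d_G(s,x) + (ℓ_x-1)·(ε/2)`
where `ℓ_x` is the minimum number of edges among shortest paths from `s` to `x`, an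
edge-minimal shortest path `p` from `s` to `a` with `t ≥ 2` edges and `r' = z_{t-2}`
satisfies `τ_a > τ_{r'} + 1`. Here `ℓ_a = p.length` and `ℓ_{r'} = q.length` for an
edge-minimal shortest path `q` from `s` to `r'`. -/
theorem stmt_11 (S : Finset Pt) (s a : {x : Pt // x ∈ S}) (ε : ℝ) (hε : 0 < ε)
    (p : (UDG S).Walk s a) (hsp : wlen p = dG S s a)
    (hpmin : ∀ p' : (UDG S).Walk s a, wlen p' = dG S s a → p.length ≤ p'.length)
    (ht : 2 ≤ p.length)
    (r' : {x : Pt // x ∈ S}) (hr' : r' = p.getVert (p.length - 2))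
    (q : (UDG S).Walk s r') (hsq : wlen q = dG S s r')
    (hqmin : ∀ q' : (UDG S).Walk s r', wlen q' = dG S s r' → q.length ≤ q'.length) :
    (dG S s r' + ((q.length : ℝ) - 1) * (ε / 2)) + 1
      < dG S s a + ((p.length : ℝ) - 1) * (ε / 2) := by
  -- decompose the reverse of p into its first two edges
  obtain ⟨b, c, h₁, h₂, pr₂, hdec⟩ := two_step p.reverse
    (by rw [SimpleGraph.Walk.length_reverse]; exact ht)
  -- identify c with r'
  have hc : r' = c := by
    rw [hr', ← SimpleGraph.Walk.getVert_reverse, hdec]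
    simp [SimpleGraph.Walk.getVert]
  subst hc
  have hrev : p = (SimpleGraph.Walk.cons h₁ (SimpleGraph.Walk.cons h₂ pr₂)).reverse := by
    rw [← hdec, SimpleGraph.Walk.reverse_reverse]
  set d₁ := dist (a : Pt) (b : Pt) with hd₁
  set d₂ := dist (b : Pt) (r' : Pt) with hd₂
  have hwp : wlen p = d₁ + d₂ + wlen pr₂ := by
    rw [hrev, wlen_reverse, wlen_cons, wlen_cons]; ring
  have hd₁pos : 0 < d₁ := dist_pos.mpr (Subtype.coe_injective.ne h₁.1)
  have hd₂pos : 0 < d₂ := dist_pos.mpr (Subtype.coe_injective.ne h₂.1)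
  -- length bookkeeping
  have hlen : p.length = pr₂.length + 2 := by
    rw [hrev, SimpleGraph.Walk.length_reverse]
    simp [SimpleGraph.Walk.length_cons]
  -- the extension walk from r' back to a along b
  let ext : (UDG S).Walk r' a :=
    SimpleGraph.Walk.cons h₂.symm (SimpleGraph.Walk.cons h₁.symm SimpleGraph.Walk.nil)
  have hwext : wlen ext = d₂ + d₁ := by
    simp [ext, wlen_cons, wlen_nil, hd₁, hd₂, dist_comm]
  -- the prefix pr₂.reverse is a shortest path from s to r'
  have hge : dG S s r' ≤ wlen pr₂ := by
    have := dG_le_wlen pr₂.reverse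
    rwa [wlen_reverse] at this
  have hqa : wlen (q.append ext) = dG S s r' + (d₂ + d₁) := by
    rw [wlen_append, hsq, hwext]
  have hle : wlen pr₂ ≤ dG S s r' := by
    have h1 : dG S s a ≤ dG S s r' + (d₂ + d₁) := hqa ▸ dG_le_wlen (q.append ext)
    have h2 : wlen pr₂ + d₁ + d₂ = dG S s a := by rw [← hsp, hwp]; ring
    linarith
  have hpre : wlen pr₂ = dG S s r' := le_antisymm hle hge
  -- q has at most pr₂.length edges
  have hqlen : q.length ≤ pr₂.length := by
    have : wlen pr₂.reverse = dG S s r' := by rw [wlen_reverse, hpre]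
    have := hqmin pr₂.reverse this
    rwa [SimpleGraph.Walk.length_reverse] at this
  -- the last two edges together are longer than 1
  have hfar : 1 < dist (r' : Pt) (a : Pt) := by
    by_contra hnear
    push_neg at hnear
    rcases eq_or_ne r' a with heq | hne
    · -- r' = a is impossible: would make the walk longer than needed
      have : dG S s a ≤ wlen pr₂ := by
        rw [hpre, heq]
      have h2 : wlen pr₂ + d₁ + d₂ = dG S s a := by rw [← hsp, hwp]; ring
      linarith
    · -- r' adjacent to a: shortcut contradicts edge-minimality of p
      have hadj : (UDG S).Adj r' a := ⟨hne, hnear⟩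
      let w : (UDG S).Walk s a := q.append (SimpleGraph.Walk.cons hadj SimpleGraph.Walk.nil)
      have htri : dist (r' : Pt) (a : Pt) ≤ d₂ + d₁ := by
        calc dist (r' : Pt) (a : Pt) ≤ dist (r' : Pt) (b : Pt) + dist (b : Pt) (a : Pt) :=
              dist_triangle _ _ _
          _ = d₂ + d₁ := by rw [hd₁, hd₂, dist_comm (r' : Pt), dist_comm (b : Pt) (a : Pt)]
      have hww : wlen w = dG S s r' + dist (r' : Pt) (a : Pt) := by
        simp [w, wlen_append, wlen_cons, wlen_nil, hsq]
      have hwle : wlen w ≤ dG S s a := by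
        have h2 : wlen pr₂ + d₁ + d₂ = dG S s a := by rw [← hsp, hwp]; ring
        rw [hww]
        linarith [hpre]
      have hweq : wlen w = dG S s a := le_antisymm hwle (dG_le_wlen w)
      have hlw : p.length ≤ w.length := hpmin w hweq
      have : w.length = q.length + 1 := by
        simp [w, SimpleGraph.Walk.length_append]
      omega
  -- conclude
  have htri : dist (r' : Pt) (a : Pt) ≤ d₂ + d₁ := by
    calc dist (r' : Pt) (a : Pt) ≤ dist (r' : Pt) (b : Pt) + dist (b : Pt) (a : Pt) :=
          dist_triangle _ _ _
      _ = d₂ + d₁ := by rw [hd₁, hd₂, dist_comm (r' : Pt), dist_comm (b : Pt) (a : Pt)]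
  have hda : dG S s r' + 1 < dG S s a := by
    have h2 : wlen pr₂ + d₁ + d₂ = dG S s a := by rw [← hsp, hwp]; ring
    linarith [hpre]
  have hql : (q.length : ℝ) ≤ (p.length : ℝ) := by
    exact_mod_cast Nat.le_trans hqlen (by omega)
  have hmul : ((q.length : ℝ) - 1) * (ε / 2) ≤ ((p.length : ℝ) - 1) * (ε / 2) :=
    mul_le_mul_of_nonneg_right (by linarith) (le_of_lt (half_pos hε))
  linarith
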